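/- arXiv:2205.08665 — 3 statements merged into one kernel-verified Lean document; each statement's English description precedes it below -/
import Mathlib

section
/- For every spin configuration s and every edge configuration w on a finite simple graph G, the unnormalized Gibbs weight times the Swendsen–Wang edge-step probability equals e^{β|E(G)|} times the unnormalized joint vertex–edge weight: W_V(s) · P(s,w) = e^{β·|E(G)|} · W_VE(s,w). -/
open Classical

noncomputable section

variable {V : Type*} [Fintype V] [DecidableEq V]

/-- Product `s i * s j` of spins over an unordered edge `{i, j}`. -/
def pairProd (s : V → ℝ) : Sym2 V → ℝ :=
  Sym2.lift ⟨fun i j => s i * s j, fun _ _ => mul_comm _ _⟩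

/-- Unnormalized Gibbs weight
`W_V(s) = exp (β Σ_{{i,j} ∈ E} s_i s_j + β Σ_i h_i s_i)`. -/
def WV (G : SimpleGraph V) [DecidableRel G.Adj] (β : ℝ) (h : V → ℝ) (s : V → ℝ) : ℝ :=
  Real.exp (β * ∑ e ∈ G.edgeFinset, pairProd s e + β * ∑ i : V, h i * s i)

/-- Edge factor of the joint vertex-edge weight:
`(1 - e^{-2β})` if `w_{ij} = 1` and `s_i = s_j`, `e^{-2β}` if `w_{ij} = 0`, else `0`. -/
def edgeFactorVE (β : ℝ) (s : V → ℝ) (b : Bool) : Sym2 V → ℝ :=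
  Sym2.lift ⟨fun i j =>
    if b then (if s i = s j then 1 - Real.exp (-2 * β) else 0) else Real.exp (-2 * β),
    by intro i j; by_cases hb : b <;> simp [hb, eq_comm]⟩

/-- Unnormalized joint vertex-edge weight `W_VE(s, w)`. -/
def WVE (G : SimpleGraph V) [DecidableRel G.Adj] (β : ℝ) (h : V → ℝ) (s : V → ℝ)
    (w : G.edgeSet → Bool) : ℝ :=
  (∏ e : G.edgeSet, edgeFactorVE β s (w e) e.val) * Real.exp (β * ∑ i : V, h i * s i)

/-- Edge factor of the Swendsen-Wang edge-step probability: if `s_i = s_j` then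
`(1 - e^{-2β})` for `w_{ij} = 1` and `e^{-2β}` for `w_{ij} = 0`; otherwise `0` for
`w_{ij} = 1` and `1` for `w_{ij} = 0`. -/
def edgeFactorP (β : ℝ) (s : V → ℝ) (b : Bool) : Sym2 V → ℝ :=
  Sym2.lift ⟨fun i j =>
    if s i = s j then (if b then 1 - Real.exp (-2 * β) else Real.exp (-2 * β))
    else (if b then 0 else 1),
    by intro i j; simp [eq_comm]⟩

/-- Swendsen-Wang edge-step probability `P(s, w)`. -/
def swP (G : SimpleGraph V) [DecidableRel G.Adj] (β : ℝ) (s : V → ℝ)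
    (w : G.edgeSet → Bool) : ℝ :=
  ∏ e : G.edgeSet, edgeFactorP β s (w e) e.val

/-- Spanning subgraph of `G` whose edges are the edges `e` with `w e = 1`. -/
def openSubgraph (G : SimpleGraph V) [DecidableRel G.Adj] (w : G.edgeSet → Bool) :
    SimpleGraph V where
  Adj i j := ∃ hij : G.Adj i j, w ⟨Sym2.mk i j, G.mem_edgeSet.mpr hij⟩ = true
  symm := ⟨by
    rintro i j ⟨hij, hw⟩
    refine ⟨hij.symm, ?_⟩
    have he : (⟨Sym2.mk j i, G.mem_edgeSet.mpr hij.symm⟩ : G.edgeSet)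
        = ⟨Sym2.mk i j, G.mem_edgeSet.mpr hij⟩ := Subtype.ext (Sym2.eq_swap)
    rw [he]; exact hw⟩
  loopless := ⟨by rintro i ⟨hij, -⟩; exact G.loopless.irrefl i hij⟩

/-- `h_γ = Σ_{i ∈ γ} h_i`: sum of the field over a connected component `γ ∈ C_w`. -/
def hComp (G : SimpleGraph V) [DecidableRel G.Adj] (h : V → ℝ) (w : G.edgeSet → Bool)
    (γ : (openSubgraph G w).ConnectedComponent) : ℝ :=
  ∑ i ∈ Finset.univ.filter (fun i => (openSubgraph G w).connectedComponentMk i = γ), h i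

/-- A configuration is compatible with the edge configuration `w` if it is constant on each
connected component of the subgraph of open edges. -/
def Compatible (G : SimpleGraph V) [DecidableRel G.Adj] (w : G.edgeSet → Bool)
    (t : V → ℝ) : Prop :=
  ∀ i j : V, (openSubgraph G w).connectedComponentMk i = (openSubgraph G w).connectedComponentMk j
    → t i = t j

/-- Swendsen-Wang spin-step probability `Q(w, t)`: for `t` compatible with `w`, the product
over components `γ ∈ C_w` of `e^{β h_γ τ_γ} / (e^{β h_γ} + e^{-β h_γ})`, where
`τ_γ = t γ.out` is the common value of `t` on `γ`; and `0` for incompatible `t`. -/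
def swQ (G : SimpleGraph V) [DecidableRel G.Adj] (β : ℝ) (h : V → ℝ) (w : G.edgeSet → Bool)
    (t : V → ℝ) : ℝ :=
  if Compatible G w t then
    ∏ γ : (openSubgraph G w).ConnectedComponent,
      Real.exp (β * hComp G h w γ * t γ.out) /
        (Real.exp (β * hComp G h w γ) + Real.exp (-(β * hComp G h w γ)))
  else 0

/-- Unnormalized edge weight
`W_E(w) = Π_{w_e = 1} (1 - e^{-2β}) · Π_{w_e = 0} e^{-2β} · Π_{γ ∈ C_w} (e^{β h_γ} + e^{-β h_γ})`. -/
def WE (G : SimpleGraph V) [DecidableRel G.Adj] (β : ℝ) (h : V → ℝ)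
    (w : G.edgeSet → Bool) : ℝ :=
  (∏ _e ∈ Finset.univ.filter (fun e : G.edgeSet => w e = true), (1 - Real.exp (-2 * β))) *
  (∏ _e ∈ Finset.univ.filter (fun e : G.edgeSet => w e = false), Real.exp (-2 * β)) *
  ∏ γ : (openSubgraph G w).ConnectedComponent,
    (Real.exp (β * hComp G h w γ) + Real.exp (-(β * hComp G h w γ)))

/-- For every spin configuration `s` and edge configuration `w`,
`W_V(s) · P(s, w) = e^{β |E(G)|} · W_VE(s, w)`. -/
theorem WV_mul_swP (G : SimpleGraph V) [DecidableRel G.Adj]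
    (β : ℝ) (hβ : 0 < β) (h : V → ℝ)
    (s : V → ℝ) (hs : ∀ i, s i = 1 ∨ s i = -1) (w : G.edgeSet → Bool) :
    WV G β h s * swP G β s w = Real.exp (β * G.edgeFinset.card) * WVE G β h s w := by
  have key : ∀ (b : Bool) (e : Sym2 V),
      Real.exp (β * pairProd s e) * edgeFactorP β s b e
        = Real.exp β * edgeFactorVE β s b e := by
    intro b e
    induction e using Sym2.ind with
    | _ i j =>
      simp only [pairProd, edgeFactorP, edgeFactorVE, Sym2.lift_mk]
      by_cases hij : s i = s j
      · have h1 : s i * s j = 1 := by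
          rcases hs i with h' | h' <;> rw [hij] at h' ⊢ <;> rw [h'] <;> norm_num
        rw [if_pos hij, h1, mul_one]
        cases b <;> simp [hij]
      · have h1 : s i * s j = -1 := by
          rcases hs i with h' | h' <;> rcases hs j with h'' | h'' <;> rw [h', h''] <;>
            norm_num <;> exact hij (h'.trans h''.symm)
        rw [if_neg hij, h1]
        cases b with
        | false =>
          simp only [Bool.false_eq_true, if_false, mul_one]
          rw [← Real.exp_add]
          congr 1; ring
        | true => simp [hij]
  unfold WV swP WVE
  rw [Real.exp_add]
  have hsum : (∑ e ∈ G.edgeFinset, pairProd s e) = ∑ e : G.edgeSet, pairProd s e.val := by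
    exact Finset.sum_subtype G.edgeFinset (fun e => SimpleGraph.mem_edgeFinset) _
  have hcard : Real.exp (β * G.edgeFinset.card) = ∏ _e : G.edgeSet, Real.exp β := by
    rw [Finset.prod_const, ← Real.exp_nat_mul, SimpleGraph.edgeFinset_card, mul_comm]
    simp
  rw [hsum, Finset.mul_sum, Real.exp_sum, hcard]
  have : (∏ e : G.edgeSet, Real.exp (β * pairProd s e.val)) *
      (∏ e : G.edgeSet, edgeFactorP β s (w e) e.val)
      = (∏ _e : G.edgeSet, Real.exp β) * ∏ e : G.edgeSet, edgeFactorVE β s (w e) e.val := by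
    rw [← Finset.prod_mul_distrib, ← Finset.prod_mul_distrib]
    exact Finset.prod_congr rfl fun e _ => key (w e) e.val
  calc (∏ e : G.edgeSet, Real.exp (β * pairProd s e.val)) *
        Real.exp (β * ∑ i : V, h i * s i) * ∏ e : G.edgeSet, edgeFactorP β s (w e) e.val
      = ((∏ e : G.edgeSet, Real.exp (β * pairProd s e.val)) *
        (∏ e : G.edgeSet, edgeFactorP β s (w e) e.val)) *
        Real.exp (β * ∑ i : V, h i * s i) := by ring
    _ = _ := by rw [this]; ring

end
end

section
/- Let w be an edge configuration on a finite simple graph G, and let s and t be spin configurations both compatible with w (i.e., w_e = 1 implies the endpoints of e carry equal spins, under s and under t). Then exp(β Σ_{{i,j}∈E(G)} s_i s_j) · P(s,w) = exp(β Σ_{{i,j}∈E(G)} t_i t_j) · P(t,w); that is, this quantity does not depend on the spin configuration. -/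
open Classical

noncomputable section

variable {V : Type*} [Fintype V] [DecidableEq V]

private lemma closed_edge_val {β : ℝ} {a b : ℝ} (ha : a = 1 ∨ a = -1) (hb : b = 1 ∨ b = -1) :
    Real.exp (β * (a * b)) * (if a = b then Real.exp (-2 * β) else 1) = Real.exp (-β) := by
  rcases ha with ha | ha <;> rcases hb with hb | hb <;>
    subst ha <;> subst hb <;> simp [← Real.exp_add] <;> norm_num <;> ring_nf

private lemma edge_val_indep (G : SimpleGraph V) [DecidableRel G.Adj]
    (β : ℝ) (w : G.edgeSet → Bool) (s t : V → ℝ)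
    (hs : ∀ i, s i = 1 ∨ s i = -1) (ht : ∀ i, t i = 1 ∨ t i = -1)
    (hsw : ∀ (i j : V) (hij : G.Adj i j),
      w ⟨Sym2.mk i j, G.mem_edgeSet.mpr hij⟩ = true → s i = s j)
    (htw : ∀ (i j : V) (hij : G.Adj i j),
      w ⟨Sym2.mk i j, G.mem_edgeSet.mpr hij⟩ = true → t i = t j)
    (e : G.edgeSet) :
    Real.exp (β * pairProd s e.val) * edgeFactorP β s (w e) e.val
      = Real.exp (β * pairProd t e.val) * edgeFactorP β t (w e) e.val := by
  obtain ⟨e, he⟩ := e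
  induction e using Sym2.ind with
  | _ i j =>
    have hij : G.Adj i j := G.mem_edgeSet.mp he
    by_cases hw : w ⟨Sym2.mk i j, he⟩ = true
    · have hseq : s i = s j := hsw i j hij hw
      have hteq : t i = t j := htw i j hij hw
      have hs1 : s i * s j = 1 := by
        rw [← hseq]; rcases hs i with h | h <;> rw [h] <;> norm_num
      have ht1 : t i * t j = 1 := by
        rw [← hteq]; rcases ht i with h | h <;> rw [h] <;> norm_num
      simp only [pairProd, edgeFactorP, Sym2.lift_mk, hw, if_true, if_pos hseq,
        if_pos hteq, hs1, ht1]
    · simp only [Bool.not_eq_true] at hw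
      simp only [pairProd, edgeFactorP, Sym2.lift_mk, hw, if_false]
      rw [show (if s i = s j then (if false then 1 - Real.exp (-2*β) else Real.exp (-2*β))
            else (if false then (0:ℝ) else 1))
          = (if s i = s j then Real.exp (-2*β) else 1) by simp,
        show (if t i = t j then (if false then 1 - Real.exp (-2*β) else Real.exp (-2*β))
            else (if false then (0:ℝ) else 1))
          = (if t i = t j then Real.exp (-2*β) else 1) by simp,
        closed_edge_val (hs i) (hs j), closed_edge_val (ht i) (ht j)]

private lemma exp_mul_swP_eq_prod (G : SimpleGraph V) [DecidableRel G.Adj]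
    (β : ℝ) (w : G.edgeSet → Bool) (u : V → ℝ) :
    Real.exp (β * ∑ e ∈ G.edgeFinset, pairProd u e) * swP G β u w
      = ∏ e : G.edgeSet, (Real.exp (β * pairProd u e.val) * edgeFactorP β u (w e) e.val) := by
  rw [swP, Finset.prod_mul_distrib]
  congr 1
  have : (∑ e ∈ G.edgeFinset, pairProd u e) = ∑ e : G.edgeSet, pairProd u e.val := by
    rw [SimpleGraph.edgeFinset]
    exact (Finset.sum_set_coe (f := fun e => pairProd u e) G.edgeSet).symm
  rw [this, Finset.mul_sum, Real.exp_sum]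

/-- For an edge configuration `w` and spin configurations `s`, `t` both
compatible with `w` (open edges join equal spins), the quantity
`exp (β Σ_{{i,j} ∈ E} s_i s_j) · P(s, w)` does not depend on the spin configuration. -/
theorem exp_mul_swP_spin_independent (G : SimpleGraph V) [DecidableRel G.Adj]
    (β : ℝ) (hβ : 0 < β) (w : G.edgeSet → Bool) (s t : V → ℝ)
    (hs : ∀ i, s i = 1 ∨ s i = -1) (ht : ∀ i, t i = 1 ∨ t i = -1)
    (hsw : ∀ (i j : V) (hij : G.Adj i j),
      w ⟨Sym2.mk i j, G.mem_edgeSet.mpr hij⟩ = true → s i = s j)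
    (htw : ∀ (i j : V) (hij : G.Adj i j),
      w ⟨Sym2.mk i j, G.mem_edgeSet.mpr hij⟩ = true → t i = t j) :
    Real.exp (β * ∑ e ∈ G.edgeFinset, pairProd s e) * swP G β s w
      = Real.exp (β * ∑ e ∈ G.edgeFinset, pairProd t e) * swP G β t w := by
  rw [exp_mul_swP_eq_prod, exp_mul_swP_eq_prod]
  exact Finset.prod_congr rfl fun e _ => edge_val_indep G β w s t hs ht hsw htw e

end
end

section
/- Invariance of the Gibbs distribution under Swendsen–Wang: with K(s,t) = Σ_{w : E(G)→{0,1}} P(s,w) · Q(w,t), for every spin configuration t on a finite simple graph G one has Σ_{s : V→{−1,+1}} W_V(s) · K(s,t) = W_V(t). -/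
open Classical

noncomputable section

variable {V : Type*} [Fintype V] [DecidableEq V]

/-! ### Auxiliary lemmas -/

section Aux

set_option linter.unusedSectionVars false

variable (G : SimpleGraph V) [DecidableRel G.Adj] (β : ℝ) (h : V → ℝ)

lemma aux_exists_adj_ne {G' : SimpleGraph V} {s : V → ℝ} :
    ∀ {i j : V}, G'.Walk i j → s i ≠ s j → ∃ a b, G'.Adj a b ∧ s a ≠ s b := by
  intro i j p
  induction p with
  | nil => intro hne; exact absurd rfl hne
  | @cons u v x hadj p ih =>
    intro hne
    by_cases hc : s u = s v
    · exact ih (fun hvx => hne (hc.trans hvx))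
    · exact ⟨u, v, hadj, hc⟩

lemma aux_mk_out {w : G.edgeSet → Bool} (γ : (openSubgraph G w).ConnectedComponent) :
    (openSubgraph G w).connectedComponentMk γ.out = γ :=
  γ.out_eq

lemma aux_prod_eq_zero {w : G.edgeSet → Bool} {s : V → ℝ}
    (hs : ¬ Compatible G w s) :
    ∏ e : G.edgeSet, edgeFactorVE β s (w e) e.val = 0 := by
  rw [Compatible] at hs
  push_neg at hs
  obtain ⟨i, j, hc, hne⟩ := hs
  obtain ⟨p⟩ := SimpleGraph.ConnectedComponent.exact hc
  obtain ⟨a, b, ⟨hab, hw⟩, hne'⟩ := aux_exists_adj_ne p hne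
  refine Finset.prod_eq_zero
    (Finset.mem_univ (⟨Sym2.mk a b, G.mem_edgeSet.mpr hab⟩ : G.edgeSet)) ?_
  rw [hw]
  simp [edgeFactorVE, hne']

lemma aux_edgeFactorVE_false {s : V → ℝ} (e : Sym2 V) :
    edgeFactorVE β s false e = Real.exp (-2 * β) := by
  induction e using Sym2.ind with
  | _ i j => simp [edgeFactorVE]

lemma aux_edgeFactorVE_true {w : G.edgeSet → Bool} {s : V → ℝ}
    (hs : Compatible G w s) (e : G.edgeSet) (hw : w e = true) :
    edgeFactorVE β s true e.val = 1 - Real.exp (-2 * β) := by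
  obtain ⟨e, he⟩ := e
  revert hw he
  induction e using Sym2.ind with
  | _ i j =>
    intro he hw
    have hadj : (openSubgraph G w).Adj i j := ⟨G.mem_edgeSet.mp he, hw⟩
    have hij : s i = s j :=
      hs i j (SimpleGraph.ConnectedComponent.connectedComponentMk_eq_of_adj hadj)
    simp [edgeFactorVE, hij]

lemma aux_prod_of_compat {w : G.edgeSet → Bool} {s : V → ℝ}
    (hs : Compatible G w s) :
    ∏ e : G.edgeSet, edgeFactorVE β s (w e) e.val =
      (∏ _e ∈ Finset.univ.filter (fun e : G.edgeSet => w e = true), (1 - Real.exp (-2 * β))) *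
      (∏ _e ∈ Finset.univ.filter (fun e : G.edgeSet => w e = false), Real.exp (-2 * β)) := by
  rw [← Finset.prod_filter_mul_prod_filter_not Finset.univ (fun e : G.edgeSet => w e = true)]
  congr 1
  · refine Finset.prod_congr rfl fun e he => ?_
    rw [Finset.mem_filter] at he
    rw [he.2, aux_edgeFactorVE_true G β hs e he.2]
  · rw [show (Finset.univ.filter (fun e : G.edgeSet => ¬ w e = true))
        = Finset.univ.filter (fun e : G.edgeSet => w e = false) by simp]
    refine Finset.prod_congr rfl fun e he => ?_
    rw [Finset.mem_filter] at he
    rw [he.2, aux_edgeFactorVE_false β e.val]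

lemma aux_field_sum {w : G.edgeSet → Bool} {s : V → ℝ}
    (hs : Compatible G w s) :
    ∑ i : V, h i * s i =
      ∑ γ : (openSubgraph G w).ConnectedComponent, hComp G h w γ * s γ.out := by
  rw [← Finset.sum_fiberwise Finset.univ
    (fun i => (openSubgraph G w).connectedComponentMk i) (fun i => h i * s i)]
  refine Finset.sum_congr rfl fun γ _ => ?_
  rw [hComp, Finset.sum_mul]
  refine Finset.sum_congr rfl fun i hi => ?_
  rw [Finset.mem_filter] at hi
  rw [hs i γ.out (by rw [hi.2, aux_mk_out])]

lemma aux_compat_of_comp (w : G.edgeSet → Bool)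
    (σ : (openSubgraph G w).ConnectedComponent → ({-1, 1} : Finset ℝ)) :
    Compatible G w (fun i => (σ ((openSubgraph G w).connectedComponentMk i) : ℝ)) :=
  fun _ _ hij => congrArg (fun γ => (σ γ : ℝ)) hij

/-- Lemma B: summing the joint weight over spins yields the edge weight. -/
lemma aux_sum_WVE (w : G.edgeSet → Bool) :
    ∑ s : V → ({-1, 1} : Finset ℝ), WVE G β h (fun i => (s i : ℝ)) w = WE G β h w := by
  classical
  rw [← Finset.sum_filter_add_sum_filter_not Finset.univ
    (fun s : V → ({-1, 1} : Finset ℝ) => Compatible G w (fun i => (s i : ℝ)))]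
  have hzero : ∑ s ∈ Finset.univ.filter
      (fun s : V → ({-1, 1} : Finset ℝ) => ¬ Compatible G w (fun i => (s i : ℝ))),
      WVE G β h (fun i => (s i : ℝ)) w = 0 := by
    refine Finset.sum_eq_zero fun s hs => ?_
    rw [Finset.mem_filter] at hs
    rw [WVE, aux_prod_eq_zero G β hs.2, zero_mul]
  rw [hzero, add_zero]
  have step : ∑ s ∈ Finset.univ.filter
      (fun s : V → ({-1, 1} : Finset ℝ) => Compatible G w (fun i => (s i : ℝ))),
      WVE G β h (fun i => (s i : ℝ)) w
      = ∑ σ : (openSubgraph G w).ConnectedComponent → ({-1, 1} : Finset ℝ),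
        WVE G β h (fun i => (σ ((openSubgraph G w).connectedComponentMk i) : ℝ)) w := by
    refine Finset.sum_bij' (fun s _ => fun γ => s γ.out)
      (fun σ _ => fun v => σ ((openSubgraph G w).connectedComponentMk v))
      (fun s _ => Finset.mem_univ _)
      (fun σ _ => Finset.mem_filter.mpr ⟨Finset.mem_univ _, aux_compat_of_comp G w σ⟩)
      ?_ ?_ ?_
    · intro s hs
      rw [Finset.mem_filter] at hs
      funext v
      exact Subtype.ext (hs.2 _ _ (aux_mk_out G _))
    · intro σ _
      funext γ
      exact congrArg σ (aux_mk_out G γ)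
    · intro s hs
      rw [Finset.mem_filter] at hs
      refine congrArg (fun f => WVE G β h f w) (funext fun v => ?_)
      exact (Subtype.ext_iff.mp
        (show s ((openSubgraph G w).connectedComponentMk v).out = s v from
          Subtype.ext (hs.2 _ _ (aux_mk_out G _))) : _).symm
  rw [step]
  have hval : ∀ σ : (openSubgraph G w).ConnectedComponent → ({-1, 1} : Finset ℝ),
      WVE G β h (fun i => (σ ((openSubgraph G w).connectedComponentMk i) : ℝ)) w
      = ((∏ _e ∈ Finset.univ.filter (fun e : G.edgeSet => w e = true),
            (1 - Real.exp (-2 * β))) *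
         (∏ _e ∈ Finset.univ.filter (fun e : G.edgeSet => w e = false),
            Real.exp (-2 * β))) *
        ∏ γ : (openSubgraph G w).ConnectedComponent,
          Real.exp (β * (hComp G h w γ * (σ γ : ℝ))) := by
    intro σ
    rw [WVE, aux_prod_of_compat G β (aux_compat_of_comp G w σ),
      aux_field_sum G h (aux_compat_of_comp G w σ)]
    simp_rw [aux_mk_out G]
    rw [Finset.mul_sum, Real.exp_sum]
  simp_rw [hval]
  rw [← Finset.mul_sum]
  have hps := Fintype.prod_sum
    (fun (γ : (openSubgraph G w).ConnectedComponent) (x : ({-1, 1} : Finset ℝ)) =>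
      Real.exp (β * (hComp G h w γ * (x : ℝ))))
  rw [← hps, WE]
  congr 1
  refine Finset.prod_congr rfl fun γ _ => ?_
  rw [Finset.sum_coe_sort ({-1, 1} : Finset ℝ)
      (fun x : ℝ => Real.exp (β * (hComp G h w γ * x)))]
  rw [Finset.sum_pair (by norm_num : (-1 : ℝ) ≠ 1)]
  rw [show β * (hComp G h w γ * (-1)) = -(β * hComp G h w γ) by ring,
    show β * (hComp G h w γ * 1) = β * hComp G h w γ by ring, add_comm]

lemma aux_edgeFinset_sum (f : Sym2 V → ℝ) :
    ∑ e ∈ G.edgeFinset, f e = ∑ e : G.edgeSet, f e.val := by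
  rw [SimpleGraph.edgeFinset, ← Finset.sum_set_coe]

lemma aux_per_edge_P {s : V → ℝ} (hs : ∀ i, s i = 1 ∨ s i = -1) (b : Bool) (e : Sym2 V) :
    Real.exp (β * pairProd s e) * edgeFactorP β s b e =
      Real.exp β * edgeFactorVE β s b e := by
  induction e using Sym2.ind with
  | _ i j =>
    by_cases hij : s i = s j
    · have h1 : s i * s j = 1 := by
        rw [hij]; rcases hs j with h2 | h2 <;> rw [h2] <;> norm_num
      have h2 : s j * s j = 1 := by rcases hs j with h2 | h2 <;> rw [h2] <;> norm_num
      simp only [pairProd, edgeFactorP, edgeFactorVE, Sym2.lift_mk, hij, if_pos, h1, mul_one]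
      cases b <;> simp [h2]
    · have h1 : s i * s j = -1 := by
        rcases hs i with h2 | h2 <;> rcases hs j with h3 | h3 <;>
          simp [h2, h3] at hij ⊢
      simp only [pairProd, edgeFactorP, edgeFactorVE, Sym2.lift_mk, hij, if_neg, h1,
        if_false, ite_false]
      cases b
      · simp only [Bool.false_eq_true, if_false, mul_one, ← Real.exp_add]
        ring_nf
      · simp

/-- Lemma A: `W_V(s) · P(s,w) = e^{β |E|} · W_VE(s,w)`. -/
lemma aux_WV_mul_swP {s : V → ℝ} (hs : ∀ i, s i = 1 ∨ s i = -1) (w : G.edgeSet → Bool) :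
    WV G β h s * swP G β s w =
      Real.exp (β * (Fintype.card G.edgeSet)) * WVE G β h s w := by
  have key : (∏ e : G.edgeSet, Real.exp (β * pairProd s e.val)) * swP G β s w
      = Real.exp (β * (Fintype.card G.edgeSet)) *
        ∏ e : G.edgeSet, edgeFactorVE β s (w e) e.val := by
    rw [swP, ← Finset.prod_mul_distrib]
    simp_rw [aux_per_edge_P β hs]
    rw [Finset.prod_mul_distrib, Finset.prod_const, Finset.card_univ, mul_comm β,
      Real.exp_nat_mul]
  calc WV G β h s * swP G β s w
      = ((∏ e : G.edgeSet, Real.exp (β * pairProd s e.val)) * swP G β s w) *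
          Real.exp (β * ∑ i : V, h i * s i) := by
        rw [WV, aux_edgeFinset_sum G (pairProd s), Real.exp_add, Finset.mul_sum,
          Real.exp_sum]
        ring
    _ = Real.exp (β * (Fintype.card G.edgeSet)) * WVE G β h s w := by
        rw [key, WVE]; ring

/-- Lemma C: `W_E(w) · Q(w,t) = W_VE(t,w)`. -/
lemma aux_WE_mul_swQ (w : G.edgeSet → Bool) (t : V → ℝ) :
    WE G β h w * swQ G β h w t = WVE G β h t w := by
  by_cases hc : Compatible G w t
  · rw [swQ, if_pos hc, WE, WVE, aux_prod_of_compat G β hc, aux_field_sum G h hc,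
      Finset.mul_sum, Real.exp_sum, mul_assoc, ← Finset.prod_mul_distrib]
    congr 1
    refine Finset.prod_congr rfl fun γ _ => ?_
    rw [mul_comm, div_mul_cancel₀ _ (by positivity), mul_assoc]
  · rw [swQ, if_neg hc, mul_zero, WVE, aux_prod_eq_zero G β hc, zero_mul]

lemma aux_sum_bool_VE {t : V → ℝ} (ht : ∀ i, t i = 1 ∨ t i = -1) (e : Sym2 V) :
    ∑ b : Bool, edgeFactorVE β t b e = Real.exp (-β) * Real.exp (β * pairProd t e) := by
  induction e using Sym2.ind with
  | _ i j =>
    rw [Fintype.sum_bool]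
    by_cases hij : t i = t j
    · have h1 : t i * t j = 1 := by
        rw [hij]; rcases ht j with h2 | h2 <;> rw [h2] <;> norm_num
      have h2 : t j * t j = 1 := by rcases ht j with h2 | h2 <;> rw [h2] <;> norm_num
      simp only [edgeFactorVE, pairProd, Sym2.lift_mk, hij, if_pos, h1, mul_one,
        ← Real.exp_add]
      norm_num [h2]
    · have h1 : t i * t j = -1 := by
        rcases ht i with h2 | h2 <;> rcases ht j with h3 | h3 <;>
          simp [h2, h3] at hij ⊢
      simp only [edgeFactorVE, pairProd, Sym2.lift_mk, hij, if_neg, h1, ite_false,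
        ← Real.exp_add]
      norm_num
      ring_nf

/-- Lemma D: summing the joint weight over edge configurations. -/
lemma aux_sum_WVE_edges {t : V → ℝ} (ht : ∀ i, t i = 1 ∨ t i = -1) :
    ∑ w : G.edgeSet → Bool, WVE G β h t w =
      Real.exp (-(β * (Fintype.card G.edgeSet))) * WV G β h t := by
  simp only [WVE]
  rw [← Finset.sum_mul]
  rw [← Fintype.prod_sum (fun (e : G.edgeSet) (b : Bool) => edgeFactorVE β t b e.val)]
  simp_rw [aux_sum_bool_VE β ht]
  rw [Finset.prod_mul_distrib, Finset.prod_const, Finset.card_univ, ← Real.exp_sum,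
    ← Real.exp_nat_mul, WV, aux_edgeFinset_sum G (pairProd t), ← Real.exp_add,
    ← Real.exp_add, ← Real.exp_add]
  congr 1
  rw [← Finset.mul_sum]
  push_cast
  ring

end Aux

/-- Invariance of the Gibbs distribution under the Swendsen-Wang kernel
`K(s, t) = Σ_w P(s, w) · Q(w, t)`: for every spin configuration `t`,
`Σ_{s : V → {-1,+1}} W_V(s) · K(s, t) = W_V(t)`. -/
theorem swendsenWang_invariant (G : SimpleGraph V) [DecidableRel G.Adj]
    (β : ℝ) (hβ : 0 < β) (h : V → ℝ) (t : V → ℝ) (ht : ∀ i, t i = 1 ∨ t i = -1) :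
    ∑ s : V → ({-1, 1} : Finset ℝ),
      WV G β h (fun i => (s i : ℝ)) *
        (∑ w : G.edgeSet → Bool, swP G β (fun i => (s i : ℝ)) w * swQ G β h w t)
      = WV G β h t := by
  have hNs : ∀ s : V → ({-1, 1} : Finset ℝ), ∀ i, ((s i : ℝ) = 1 ∨ (s i : ℝ) = -1) := by
    intro s i
    have := (s i).2
    rw [Finset.mem_insert, Finset.mem_singleton] at this
    tauto
  have key : ∀ s : V → ({-1, 1} : Finset ℝ),
      WV G β h (fun i => (s i : ℝ)) *
        (∑ w : G.edgeSet → Bool, swP G β (fun i => (s i : ℝ)) w * swQ G β h w t)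
      = ∑ w : G.edgeSet → Bool, Real.exp (β * (Fintype.card G.edgeSet)) *
          (WVE G β h (fun i => (s i : ℝ)) w * swQ G β h w t) := by
    intro s
    rw [Finset.mul_sum]
    refine Finset.sum_congr rfl fun w _ => ?_
    rw [← mul_assoc, aux_WV_mul_swP G β h (hNs s) w]
    ring
  simp_rw [key]
  rw [Finset.sum_comm]
  have step : ∀ w : G.edgeSet → Bool,
      ∑ s : V → ({-1, 1} : Finset ℝ), Real.exp (β * (Fintype.card G.edgeSet)) *
        (WVE G β h (fun i => (s i : ℝ)) w * swQ G β h w t)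
      = Real.exp (β * (Fintype.card G.edgeSet)) * WVE G β h t w := by
    intro w
    simp_rw [← mul_assoc]
    rw [← Finset.sum_mul, ← Finset.mul_sum, aux_sum_WVE G β h w, mul_assoc, aux_WE_mul_swQ G β h w t]
  simp_rw [step]
  rw [← Finset.mul_sum, aux_sum_WVE_edges G β h ht, ← mul_assoc, ← Real.exp_add]
  simp

end
end
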